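/- Let λ ∈ ℝ, set μ_j := −j⁴π⁴ + λ j²π², and let a ∈ ℝ with a ∉ 𝒩₁. Then there exists a constant C > 0 such that for every positive integer l one has ∑_{j≥1, j≠l} j² / (a + μ_j − μ_l)² ≤ C / l⁴. -/

import Mathlib

open Real

noncomputable def muu (lam x : ℝ) : ℝ := -x^4*π^4 + lam*x^2*π^2

lemma dne (lam a : ℝ)
    (ha : a ∉ {x : ℝ | ∃ j k : ℕ+,
      x = (-(k : ℝ) ^ 4 * π ^ 4 + lam * (k : ℝ) ^ 2 * π ^ 2)
        - (-(j : ℝ) ^ 4 * π ^ 4 + lam * (j : ℝ) ^ 2 * π ^ 2)})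
    (j l : ℕ+) :
    a + muu lam j - muu lam l ≠ 0 := by
  intro h
  exact ha ⟨j, l, by simp only [muu] at h ⊢; linarith⟩

set_option maxHeartbeats 1000000 in
lemma keyLB (lam a : ℝ)
    (ha : a ∉ {x : ℝ | ∃ j k : ℕ+,
      x = (-(k : ℝ) ^ 4 * π ^ 4 + lam * (k : ℝ) ^ 2 * π ^ 2)
        - (-(j : ℝ) ^ 4 * π ^ 4 + lam * (j : ℝ) ^ 2 * π ^ 2)}) :
    ∃ ε > (0:ℝ), ∀ j l : ℕ+, j ≠ l →
      ε * (|(j:ℝ)^2 - (l:ℝ)^2| * ((j:ℝ)^2 + (l:ℝ)^2)) ≤ |a + muu lam j - muu lam l| := by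
  have hπ : (0:ℝ) < π := pi_pos
  set N : ℕ := max 3 (⌈2*|lam|/π^2 + 4*|a|/π^4⌉₊ + 1) with hN
  have hN3 : 3 ≤ N := le_max_left _ _
  have hNR : 2*|lam|/π^2 + 4*|a|/π^4 ≤ (N:ℝ) := by
    calc 2*|lam|/π^2 + 4*|a|/π^4 ≤ (⌈2*|lam|/π^2 + 4*|a|/π^4⌉₊ : ℝ) := Nat.le_ceil _
    _ ≤ (N:ℝ) := by exact_mod_cast Nat.le_max_right 3 _ |>.trans' (Nat.le_succ _)
  have hNlam : 2*|lam| ≤ (N:ℝ)*π^2 := by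
    have h0 : (0:ℝ) ≤ 4*|a|/π^4 := by positivity
    have : 2*|lam|/π^2 ≤ (N:ℝ) := by linarith
    rw [div_le_iff₀ (by positivity : (0:ℝ) < π^2)] at this
    linarith
  have hNa : 4*|a| ≤ (N:ℝ)*π^4 := by
    have h0 : (0:ℝ) ≤ 2*|lam|/π^2 := by positivity
    have : 4*|a|/π^4 ≤ (N:ℝ) := by linarith
    rw [div_le_iff₀ (by positivity : (0:ℝ) < π^4)] at this
    linarith
  set F : Finset (ℕ × ℕ) :=
    (Finset.range N ×ˢ Finset.range N).filter
      (fun p => 0 < p.1 ∧ 0 < p.2 ∧ p.1 ≠ p.2) with hF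
  have hFne : F.Nonempty := by
    refine ⟨(1,2), ?_⟩
    simp only [hF, Finset.mem_filter, Finset.mem_product, Finset.mem_range]
    omega
  set δ : ℝ := F.inf' hFne (fun p => |a + muu lam p.1 - muu lam p.2|) with hδdef
  have hδ : 0 < δ := by
    rw [hδdef, Finset.lt_inf'_iff]
    intro p hp
    simp only [hF, Finset.mem_filter, Finset.mem_product, Finset.mem_range] at hp
    have h1 := dne lam a ha ⟨p.1, hp.2.1⟩ ⟨p.2, hp.2.2.1⟩
    rw [abs_pos]
    simpa using h1
  have hN0 : (0:ℝ) < (N:ℝ) := by exact_mod_cast Nat.lt_of_lt_of_le (by norm_num) hN3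
  clear_value N F δ
  refine ⟨min (π^4/4) (δ/(N:ℝ)^2), by positivity, ?_⟩
  intro j l hjl
  set B : ℝ := |(j:ℝ)^2 - (l:ℝ)^2| with hB
  set S : ℝ := (j:ℝ)^2 + (l:ℝ)^2 with hS
  clear_value B S
  have hj1 : (1:ℝ) ≤ (j:ℝ) := by exact_mod_cast j.one_le
  have hl1 : (1:ℝ) ≤ (l:ℝ) := by exact_mod_cast l.one_le
  have hB1 : 1 ≤ B := by
    have hnq : ((j:ℕ)^2 : ℤ) ≠ ((l:ℕ)^2 : ℤ) := by
      have h0 : (j:ℕ) ≠ (l:ℕ) := fun h => hjl (PNat.coe_injective h)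
      have h2 : (j:ℕ)^2 ≠ (l:ℕ)^2 := fun h => h0 (Nat.pow_left_injective (by norm_num) h)
      exact_mod_cast h2
    have := Int.one_le_abs (sub_ne_zero.mpr hnq)
    calc (1:ℝ) ≤ |(((j:ℕ)^2 : ℤ) - ((l:ℕ)^2 : ℤ) : ℤ)| := by exact_mod_cast this
    _ = B := by rw [hB]; push_cast; ring_nf
  have hS0 : 0 < S := by rw [hS]; positivity
  have hBS : 0 ≤ B * S := by positivity
  have hm : muu lam j - muu lam l = ((l:ℝ)^2-(j:ℝ)^2) * (π^4*S - lam*π^2) := by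
    rw [hS]; simp only [muu]; ring
  by_cases hcase : (N:ℝ) ≤ S
  · -- large case
    have hπ4 : (0:ℝ) < π^4 := by positivity
    have hlam2 : 2*|lam| ≤ π^2 * S := by nlinarith [sq_nonneg π]
    have ha2 : 4*|a| ≤ π^4 * S := by nlinarith
    have hinner : π^4*S/2 ≤ π^4*S - lam*π^2 := by
      have h1 : lam*π^2 ≤ |lam| * π^2 := by nlinarith [le_abs_self lam, sq_nonneg π]
      have h2 : |lam| * π^2 ≤ π^4*S/2 := by nlinarith [sq_nonneg π]
      linarith
    have hinner0 : 0 ≤ π^4*S - lam*π^2 := by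
      have : (0:ℝ) ≤ π^4*S/2 := by positivity
      linarith
    have habs : |muu lam j - muu lam l| = B * (π^4*S - lam*π^2) := by
      rw [hm, abs_mul, abs_of_nonneg hinner0, abs_sub_comm, ← hB]
    have t1 : π^4/2 * (B*S) ≤ |muu lam j - muu lam l| := by
      rw [habs]
      have : π^4*S/2 * 1 ≤ (π^4*S - lam*π^2) * B := by
        apply mul_le_mul hinner hB1 (by norm_num) (by linarith)
      nlinarith
    have t2 : |a| ≤ π^4/4 * (B*S) := by
      nlinarith [mul_le_mul_of_nonneg_right (sub_nonneg.mpr hB1) (by positivity : (0:ℝ) ≤ π^4*S)]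
    have t3 : |muu lam j - muu lam l| ≤ |a + muu lam j - muu lam l| + |a| := by
      calc |muu lam j - muu lam l| = |(a + muu lam j - muu lam l) + (-a)| := by ring_nf
      _ ≤ |a + muu lam j - muu lam l| + |(-a)| := abs_add_le _ _
      _ = |a + muu lam j - muu lam l| + |a| := by rw [abs_neg]
    have t4 : min (π^4/4) (δ/(N:ℝ)^2) * (B*S) ≤ π^4/4 * (B*S) :=
      mul_le_mul_of_nonneg_right (min_le_left _ _) hBS
    linarith
  · -- small case
    push_neg at hcase
    have hjN : (j:ℕ) < N := by
      have hj2 : (j:ℝ) ≤ (j:ℝ)^2 := by nlinarith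
      have hl2 : (1:ℝ) ≤ (l:ℝ)^2 := by nlinarith
      have : (j:ℝ) < (N:ℝ) := by rw [hS] at hcase; linarith
      exact_mod_cast this
    have hlN : (l:ℕ) < N := by
      have hl2 : (l:ℝ) ≤ (l:ℝ)^2 := by nlinarith
      have hj2 : (1:ℝ) ≤ (j:ℝ)^2 := by nlinarith
      have : (l:ℝ) < (N:ℝ) := by rw [hS] at hcase; linarith
      exact_mod_cast this
    have hmem : ((j:ℕ), (l:ℕ)) ∈ F := by
      rw [hF]
      simp only [Finset.mem_filter, Finset.mem_product, Finset.mem_range]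
      exact ⟨⟨hjN, hlN⟩, j.pos, l.pos, fun h => hjl (PNat.coe_injective h)⟩
    have hdel : δ ≤ |a + muu lam j - muu lam l| := by
      rw [hδdef]
      have := Finset.inf'_le (fun p : ℕ × ℕ => |a + muu lam p.1 - muu lam p.2|) hmem
      exact this
    have hBSle : B * S ≤ (N:ℝ)^2 := by
      have hBleS : B ≤ S := by
        rw [hB, hS, abs_le]
        constructor <;> nlinarith [sq_nonneg (j:ℝ), sq_nonneg (l:ℝ)]
      nlinarith [hS0, hB1]
    calc min (π^4/4) (δ/(N:ℝ)^2) * (B*S) ≤ δ/(N:ℝ)^2 * (B*S) :=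
          mul_le_mul_of_nonneg_right (min_le_right _ _) hBS
    _ ≤ δ/(N:ℝ)^2 * (N:ℝ)^2 := by
          apply mul_le_mul_of_nonneg_left hBSle (by positivity)
    _ = δ := by field_simp
    _ ≤ |a + muu lam j - muu lam l| := hdel


set_option maxHeartbeats 1000000 in
/-- With μ_j := −j⁴π⁴ + λj²π² and a ∉ 𝒩₁ := {μ_k − μ_j : j, k positive integers},
there is C > 0 such that ∑_{j≠l} j²/(a + μ_j − μ_l)² ≤ C/l⁴ for all l. -/
theorem stmt12 (lam a : ℝ)
    (ha : a ∉ {x : ℝ | ∃ j k : ℕ+,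
      x = (-(k : ℝ) ^ 4 * π ^ 4 + lam * (k : ℝ) ^ 2 * π ^ 2)
        - (-(j : ℝ) ^ 4 * π ^ 4 + lam * (j : ℝ) ^ 2 * π ^ 2)}) :
    ∃ C > (0 : ℝ), ∀ l : ℕ+,
      Summable (fun j : {j : ℕ+ // j ≠ l} =>
        ((j : ℕ+) : ℝ) ^ 2 /
          (a + (-((j : ℕ+) : ℝ) ^ 4 * π ^ 4 + lam * ((j : ℕ+) : ℝ) ^ 2 * π ^ 2)
            - (-(l : ℝ) ^ 4 * π ^ 4 + lam * (l : ℝ) ^ 2 * π ^ 2)) ^ 2) ∧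
      (∑' j : {j : ℕ+ // j ≠ l},
        ((j : ℕ+) : ℝ) ^ 2 /
          (a + (-((j : ℕ+) : ℝ) ^ 4 * π ^ 4 + lam * ((j : ℕ+) : ℝ) ^ 2 * π ^ 2)
            - (-(l : ℝ) ^ 4 * π ^ 4 + lam * (l : ℝ) ^ 2 * π ^ 2)) ^ 2)
        ≤ C / (l : ℝ) ^ 4 := by
  obtain ⟨ε, hε, hkey⟩ := keyLB lam a ha
  have hTsum : Summable (fun n : ℤ => 1 / (n:ℝ) ^ 2) :=
    Real.summable_one_div_int_pow.mpr (by norm_num)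
  set T : ℝ := ∑' n : ℤ, 1 / (n:ℝ) ^ 2 with hT
  have hT0 : 0 < T := Summable.tsum_pos hTsum (fun n => by positivity) 1 (by norm_num)
  refine ⟨T / ε^2, by positivity, fun l => ?_⟩
  have hl1 : (1:ℝ) ≤ (l:ℝ) := by exact_mod_cast l.one_le
  -- the dominating function
  set g : {j : ℕ+ // j ≠ l} → ℝ :=
    fun j => 1 / ((((j:ℕ+)):ℝ) - (l:ℝ))^2 with hg
  -- injection into ℤ
  set φ : {j : ℕ+ // j ≠ l} → ℤ := fun j => ((j:ℕ+):ℤ) - (l:ℤ) with hφ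
  have hφinj : Function.Injective φ := by
    intro x y h
    simp only [hφ, sub_left_inj] at h
    exact Subtype.ext (by exact_mod_cast h)
  have hgeq : g = (fun n : ℤ => 1 / (n:ℝ)^2) ∘ φ := by
    funext j
    simp only [hg, hφ, Function.comp_apply]
    norm_num
  have hgsum : Summable g := by rw [hgeq]; exact hTsum.comp_injective hφinj
  have hgT : ∑' j, g j ≤ T := by
    rw [hgeq, hT]
    exact Summable.tsum_le_tsum_of_inj φ hφinj (fun n _ => by positivity)
      (fun j => le_refl _) (hgeq ▸ hgsum) hTsum
  -- termwise comparison
  have hcomp : ∀ j : {j : ℕ+ // j ≠ l},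
      (((j:ℕ+)):ℝ) ^ 2 /
        (a + (-(((j:ℕ+)):ℝ) ^ 4 * π ^ 4 + lam * (((j:ℕ+)):ℝ) ^ 2 * π ^ 2)
          - (-(l : ℝ) ^ 4 * π ^ 4 + lam * (l : ℝ) ^ 2 * π ^ 2)) ^ 2
      ≤ (1/(ε^2 * (l:ℝ)^4)) * g j := by
    rintro ⟨j, hj⟩
    have hj1 : (1:ℝ) ≤ (j:ℝ) := by exact_mod_cast j.one_le
    have hkey' := hkey j l hj
    have hjlne : ((j:ℝ) - (l:ℝ)) ≠ 0 := by
      have : (j:ℝ) ≠ (l:ℝ) := by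
        intro h; exact hj (PNat.coe_injective (by exact_mod_cast h))
      exact sub_ne_zero.mpr this
    have hd : a + (-((j:ℕ+):ℝ) ^ 4 * π ^ 4 + lam * ((j:ℕ+):ℝ) ^ 2 * π ^ 2)
          - (-(l : ℝ) ^ 4 * π ^ 4 + lam * (l : ℝ) ^ 2 * π ^ 2)
        = a + muu lam j - muu lam l := by simp only [muu]
    rw [hd]
    have hsq : ε^2 * (((j:ℝ)^2 - (l:ℝ)^2)^2 * ((j:ℝ)^2 + (l:ℝ)^2)^2)
        ≤ (a + muu lam j - muu lam l)^2 := by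
      have h2 : (ε * (|(j:ℝ)^2 - (l:ℝ)^2| * ((j:ℝ)^2 + (l:ℝ)^2)))^2
          ≤ |a + muu lam j - muu lam l|^2 :=
        pow_le_pow_left₀ (by positivity) hkey' 2
      calc ε^2 * (((j:ℝ)^2 - (l:ℝ)^2)^2 * ((j:ℝ)^2 + (l:ℝ)^2)^2)
          = (ε * (|(j:ℝ)^2 - (l:ℝ)^2| * ((j:ℝ)^2 + (l:ℝ)^2)))^2 := by
            rw [mul_pow, mul_pow, sq_abs]
      _ ≤ |a + muu lam j - muu lam l|^2 := h2
      _ = (a + muu lam j - muu lam l)^2 := sq_abs _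
    have hjl2 : ((j:ℝ)^2 - (l:ℝ)^2) ≠ 0 := by
      have h1 : ((j:ℝ)^2 - (l:ℝ)^2) = ((j:ℝ) - l) * ((j:ℝ) + l) := by ring
      rw [h1]
      exact mul_ne_zero hjlne (by positivity)
    have hD1 : 0 < ε^2 * (((j:ℝ)^2 - (l:ℝ)^2)^2 * ((j:ℝ)^2 + (l:ℝ)^2)^2) := by positivity
    have hd2 : 0 < (a + muu lam j - muu lam l)^2 := lt_of_lt_of_le hD1 hsq
    calc ((j:ℕ+):ℝ) ^ 2 / (a + muu lam j - muu lam l)^2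
        ≤ ((j:ℕ+):ℝ) ^ 2 / (ε^2 * (((j:ℝ)^2 - (l:ℝ)^2)^2 * ((j:ℝ)^2 + (l:ℝ)^2)^2)) :=
          div_le_div_of_nonneg_left (by positivity) hD1 hsq
    _ ≤ (1/(ε^2 * (l:ℝ)^4)) * g ⟨j, hj⟩ := by
          rw [hg]
          rw [div_le_iff₀ hD1]
          have hE : (j:ℝ)^2 * (l:ℝ)^4 ≤ ((j:ℝ)+l)^2 * ((j:ℝ)^2+(l:ℝ)^2)^2 := by
            have e1 : (j:ℝ)^2 ≤ ((j:ℝ)+l)^2 := by nlinarith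
            have e2 : (l:ℝ)^4 ≤ ((j:ℝ)^2+(l:ℝ)^2)^2 := by nlinarith [sq_nonneg (j:ℝ)]
            exact mul_le_mul e1 e2 (by positivity) (by positivity)
          have hfrac : (1/(ε^2 * (l:ℝ)^4)) * (1 / (((j:ℝ) - (l:ℝ))^2)) 
              = 1 / (ε^2 * (l:ℝ)^4 * ((j:ℝ) - (l:ℝ))^2) := by
            rw [div_mul_div_comm, one_mul]
          rw [hfrac, div_mul_eq_mul_div, le_div_iff₀ (by positivity)]
          have key : (j:ℝ)^2 * ((l:ℝ)^4 * ((j:ℝ)-l)^2) 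
              ≤ (((j:ℝ)^2 - (l:ℝ)^2)^2 * ((j:ℝ)^2 + (l:ℝ)^2)^2) := by
            nlinarith [mul_le_mul_of_nonneg_right hE (sq_nonneg ((j:ℝ)-l))]
          nlinarith [mul_le_mul_of_nonneg_left key (le_of_lt (mul_pos hε hε)), sq_nonneg ε]
  have hfsum : Summable (fun j : {j : ℕ+ // j ≠ l} =>
      ((j : ℕ+) : ℝ) ^ 2 /
        (a + (-((j : ℕ+) : ℝ) ^ 4 * π ^ 4 + lam * ((j : ℕ+) : ℝ) ^ 2 * π ^ 2)
          - (-(l : ℝ) ^ 4 * π ^ 4 + lam * (l : ℝ) ^ 2 * π ^ 2)) ^ 2) := by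
    apply Summable.of_nonneg_of_le (fun j => by positivity) hcomp
    exact hgsum.mul_left _
  refine ⟨hfsum, ?_⟩
  calc (∑' j : {j : ℕ+ // j ≠ l},
        ((j : ℕ+) : ℝ) ^ 2 /
          (a + (-((j : ℕ+) : ℝ) ^ 4 * π ^ 4 + lam * ((j : ℕ+) : ℝ) ^ 2 * π ^ 2)
            - (-(l : ℝ) ^ 4 * π ^ 4 + lam * (l : ℝ) ^ 2 * π ^ 2)) ^ 2)
      ≤ ∑' j, (1/(ε^2 * (l:ℝ)^4)) * g j :=
        Summable.tsum_le_tsum hcomp hfsum (hgsum.mul_left _)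
  _ = (1/(ε^2 * (l:ℝ)^4)) * ∑' j, g j := tsum_mul_left
  _ ≤ (1/(ε^2 * (l:ℝ)^4)) * T := by
        apply mul_le_mul_of_nonneg_left hgT (by positivity)
  _ = (T / ε^2) / (l:ℝ)^4 := by ring
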